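/- Assume Hypothesis (*). Then the adjacency design D(Γ) has no repeated blocks (distinct blocks have distinct point-sets) and is resolvable with exactly r parallel classes, the parallel classes being the N-orbits on B'. Moreover there are integers k ≥ 2 and ℓ ≥ 2 such that D(Γ) has kℓ points, every block is incident with exactly k points, and every point is incident with exactly r blocks (so D(Γ) is a 1-(kℓ, k, r) design). -/

import Mathlib

open SimpleGraph

section Prelude

variable {V : Type*}

/-- `g` is an automorphism of the graph `Γ`. -/
def IsGraphAut (Γ : SimpleGraph V) (g : Equiv.Perm V) : Prop :=
  ∀ u v : V, Γ.Adj (g u) (g v) ↔ Γ.Adj u v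

/-- `(B | Bᶜ)` is an (ordered) bipartition of `Γ`: every edge joins `B` and `Bᶜ`. -/
def IsBipartition (Γ : SimpleGraph V) (B : Set V) : Prop :=
  ∀ u v : V, Γ.Adj u v → (u ∈ B ↔ v ∉ B)

/-- The orbit of `x` under a subgroup `N` of permutations of `V`. -/
def POrbit (N : Subgroup (Equiv.Perm V)) (x : V) : Set V :=
  {y | ∃ n ∈ N, n x = y}

/-- `Γ` is locally `(G,s)`-distance transitive: the diameter is at least `s` and for
every vertex `v` and every `1 ≤ i ≤ s` the stabiliser of `v` in `G` is transitive on
the set of vertices at distance `i` from `v`. -/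
def LocallyDistTrans (Γ : SimpleGraph V) (G : Subgroup (Equiv.Perm V)) (s : ℕ) : Prop :=
  s ≤ Γ.diam ∧
    ∀ (v x y : V) (i : ℕ), 1 ≤ i → i ≤ s → Γ.dist v x = i → Γ.dist v y = i →
      ∃ g ∈ G, g v = v ∧ g x = y

/-- `Γ`, bipartite with ordered bipartition `(B | Bᶜ)`, is `r`-starlike relative to `N`:
`N` leaves `B` invariant, is transitive on `B`, and has exactly `r` orbits on `Bᶜ`. -/
def IsStarlike (Γ : SimpleGraph V) (B : Set V) (N : Subgroup (Equiv.Perm V)) (r : ℕ) : Prop :=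
  (∀ n ∈ N, ∀ v : V, n v ∈ B ↔ v ∈ B) ∧
    (∀ x ∈ B, ∀ y ∈ B, ∃ n ∈ N, n x = y) ∧
    {S : Set V | ∃ x ∈ Bᶜ, S = POrbit N x}.ncard = r

/-- `G` is transitive on the set `S` of (ordered) pairs. -/
def PairTrans (G : Subgroup (Equiv.Perm V)) (S : Set (V × V)) : Prop :=
  ∀ p ∈ S, ∀ q ∈ S, ∃ g ∈ G, g p.1 = q.1 ∧ g p.2 = q.2

/-- The adjacency design of the bipartite graph `Γ` with ordered bipartition `(B | Bᶜ)`
(points `B`, blocks `Bᶜ`, incidence = adjacency) is `G`-pairwise transitive. -/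
def AdjPT (Γ : SimpleGraph V) (B : Set V) (G : Subgroup (Equiv.Perm V)) : Prop :=
  (∀ g ∈ G, ∀ v : V, g v ∈ B ↔ v ∈ B) ∧
  PairTrans G {p | p.1 ∈ B ∧ p.2 ∈ Bᶜ ∧ Γ.Adj p.1 p.2} ∧
  PairTrans G {p | p.1 ∈ B ∧ p.2 ∈ Bᶜ ∧ ¬ Γ.Adj p.1 p.2} ∧
  PairTrans G {p | p.1 ∈ B ∧ p.2 ∈ B ∧ p.1 ≠ p.2 ∧ ∃ b ∈ Bᶜ, Γ.Adj p.1 b ∧ Γ.Adj p.2 b} ∧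
  PairTrans G {p | p.1 ∈ B ∧ p.2 ∈ B ∧ p.1 ≠ p.2 ∧ ¬ ∃ b ∈ Bᶜ, Γ.Adj p.1 b ∧ Γ.Adj p.2 b} ∧
  PairTrans G {p | p.1 ∈ Bᶜ ∧ p.2 ∈ Bᶜ ∧ p.1 ≠ p.2 ∧ ∃ x ∈ B, Γ.Adj x p.1 ∧ Γ.Adj x p.2} ∧
  PairTrans G {p | p.1 ∈ Bᶜ ∧ p.2 ∈ Bᶜ ∧ p.1 ≠ p.2 ∧ ¬ ∃ x ∈ B, Γ.Adj x p.1 ∧ Γ.Adj x p.2}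

/-- The adjacency design of `Γ` (points `B`, blocks `Bᶜ`) is `N`-nicely affine:
`N` acts as automorphisms preserving the biparts, transitively on points, and there is a
constant `μ` such that distinct blocks in different `N`-orbits have exactly `μ` common
points, while distinct blocks in the same `N`-orbit have no common point. -/
def AdjNA (Γ : SimpleGraph V) (B : Set V) (N : Subgroup (Equiv.Perm V)) : Prop :=
  (∀ n ∈ N, ∀ v : V, n v ∈ B ↔ v ∈ B) ∧
  (∀ x ∈ B, ∀ y ∈ B, ∃ n ∈ N, n x = y) ∧
  ∃ μ : ℕ, ∀ b ∈ Bᶜ, ∀ b' ∈ Bᶜ, b ≠ b' →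
    ((b' ∈ POrbit N b → ¬ ∃ x, Γ.Adj x b ∧ Γ.Adj x b') ∧
     (b' ∉ POrbit N b → {x | Γ.Adj x b ∧ Γ.Adj x b'}.ncard = μ))

/-- The adjacency design of `Γ` (points `B`, blocks `Bᶜ`) is affine: the blocks can be
partitioned into parallel classes, and there is a positive constant `μ` such that blocks
in distinct parallel classes have exactly `μ` common points. -/
def AdjAffine (Γ : SimpleGraph V) (B : Set V) : Prop :=
  ∃ 𝓒 : Set (Set V), (∀ C ∈ 𝓒, C ⊆ Bᶜ) ∧ (∀ b ∈ Bᶜ, ∃! C, C ∈ 𝓒 ∧ b ∈ C) ∧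
    (∀ C ∈ 𝓒, ∀ x ∈ B, ∃! b, b ∈ C ∧ Γ.Adj x b) ∧
    ∃ μ : ℕ, 0 < μ ∧ ∀ C ∈ 𝓒, ∀ C' ∈ 𝓒, C ≠ C' → ∀ b ∈ C, ∀ b' ∈ C',
      {x | Γ.Adj x b ∧ Γ.Adj x b'}.ncard = μ

end Prelude

section DesignPrelude

variable {P L : Type*}

/-- The design `(P, L, I)` is `G`-pairwise transitive. -/
def DesignPT (I : P → L → Prop) (G : Type*) [Group G] [MulAction G P] [MulAction G L] :
    Prop :=
  (∀ (x : P) (b : L) (x' : P) (b' : L), I x b → I x' b' →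
      ∃ g : G, g • x = x' ∧ g • b = b') ∧
  (∀ (x : P) (b : L) (x' : P) (b' : L), ¬ I x b → ¬ I x' b' →
      ∃ g : G, g • x = x' ∧ g • b = b') ∧
  (∀ x y x' y' : P, x ≠ y → x' ≠ y' → (∃ b, I x b ∧ I y b) → (∃ b, I x' b ∧ I y' b) →
      ∃ g : G, g • x = x' ∧ g • y = y') ∧
  (∀ x y x' y' : P, x ≠ y → x' ≠ y' → ¬ (∃ b, I x b ∧ I y b) → ¬ (∃ b, I x' b ∧ I y' b) →
      ∃ g : G, g • x = x' ∧ g • y = y') ∧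
  (∀ b c b' c' : L, b ≠ c → b' ≠ c' → (∃ x, I x b ∧ I x c) → (∃ x, I x b' ∧ I x c') →
      ∃ g : G, g • b = b' ∧ g • c = c') ∧
  (∀ b c b' c' : L, b ≠ c → b' ≠ c' → ¬ (∃ x, I x b ∧ I x c) → ¬ (∃ x, I x b' ∧ I x c') →
      ∃ g : G, g • b = b' ∧ g • c = c')

/-- The design `(P, L, I)` is `N`-nicely affine for the subgroup `N` of `G`. -/
def DesignNA (I : P → L → Prop) (G : Type*) [Group G] [MulAction G P] [MulAction G L]
    (N : Subgroup G) : Prop :=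
  (∀ x y : P, ∃ n ∈ N, n • x = y) ∧
  ∃ μ : ℕ, ∀ b b' : L, b ≠ b' →
    (((∃ n ∈ N, n • b = b') → ¬ ∃ x, I x b ∧ I x b') ∧
     ((¬ ∃ n ∈ N, n • b = b') → {x | I x b ∧ I x b'}.ncard = μ))

/-- The incidence graph of the design `(P, L, I)`. -/
def DIncGraph (I : P → L → Prop) : SimpleGraph (P ⊕ L) :=
  SimpleGraph.fromRel (fun a b => ∃ x s, a = Sum.inl x ∧ b = Sum.inr s ∧ I x s)

end DesignPrelude

section SetDesign

variable {V : Type*}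

/-- Pairwise transitivity for a design whose points are the elements of `V`, whose
blocks are the members of `𝓑` (identified with their point-sets) and whose
incidence relation is membership; `G` is a group of permutations of `V`. -/
def SetPT (𝓑 : Set (Set V)) (G : Subgroup (Equiv.Perm V)) : Prop :=
  (∀ x : V, ∀ s ∈ 𝓑, ∀ x' : V, ∀ s' ∈ 𝓑, x ∈ s → x' ∈ s' →
      ∃ g ∈ G, g x = x' ∧ (fun z => g z) '' s = s') ∧
  (∀ x : V, ∀ s ∈ 𝓑, ∀ x' : V, ∀ s' ∈ 𝓑, x ∉ s → x' ∉ s' →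
      ∃ g ∈ G, g x = x' ∧ (fun z => g z) '' s = s') ∧
  (∀ x y x' y' : V, x ≠ y → x' ≠ y' → (∃ s ∈ 𝓑, x ∈ s ∧ y ∈ s) → (∃ s ∈ 𝓑, x' ∈ s ∧ y' ∈ s) →
      ∃ g ∈ G, g x = x' ∧ g y = y') ∧
  (∀ x y x' y' : V, x ≠ y → x' ≠ y' → ¬ (∃ s ∈ 𝓑, x ∈ s ∧ y ∈ s) → ¬ (∃ s ∈ 𝓑, x' ∈ s ∧ y' ∈ s) →
      ∃ g ∈ G, g x = x' ∧ g y = y') ∧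
  (∀ s ∈ 𝓑, ∀ t ∈ 𝓑, ∀ s' ∈ 𝓑, ∀ t' ∈ 𝓑, s ≠ t → s' ≠ t' →
      (s ∩ t).Nonempty → (s' ∩ t').Nonempty →
      ∃ g ∈ G, (fun z => g z) '' s = s' ∧ (fun z => g z) '' t = t') ∧
  (∀ s ∈ 𝓑, ∀ t ∈ 𝓑, ∀ s' ∈ 𝓑, ∀ t' ∈ 𝓑, s ≠ t → s' ≠ t' →
      s ∩ t = ∅ → s' ∩ t' = ∅ →
      ∃ g ∈ G, (fun z => g z) '' s = s' ∧ (fun z => g z) '' t = t')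

/-- Nice affineness for a design with point set `V`, blocks `𝓑` (point-sets) and
incidence given by membership, relative to a permutation group `N`. -/
def SetNA (𝓑 : Set (Set V)) (N : Subgroup (Equiv.Perm V)) : Prop :=
  (∀ x y : V, ∃ n ∈ N, n x = y) ∧
  (∀ n ∈ N, ∀ s ∈ 𝓑, (fun z => n z) '' s ∈ 𝓑) ∧
  ∃ μ : ℕ, ∀ s ∈ 𝓑, ∀ s' ∈ 𝓑, s ≠ s' →
    (((∃ n ∈ N, (fun z => n z) '' s = s') → s ∩ s' = ∅) ∧
     ((¬ ∃ n ∈ N, (fun z => n z) '' s = s') → (s ∩ s').ncard = μ))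

end SetDesign

section QuotientGraph

variable {V : Type*}

/-- The setoid on vertices whose classes are the `N`-orbits. -/
def orbitSetoid (N : Subgroup (Equiv.Perm V)) : Setoid V where
  r x y := ∃ n ∈ N, n x = y
  iseqv := by
    refine ⟨fun x => ⟨1, N.one_mem, rfl⟩, ?_, ?_⟩
    · rintro x y ⟨n, hn, rfl⟩
      exact ⟨n⁻¹, N.inv_mem hn, by simp⟩
    · rintro x y z ⟨n, hn, rfl⟩ ⟨m, hm, rfl⟩
      exact ⟨m * n, N.mul_mem hm hn, rfl⟩

/-- The normal quotient graph `Γ_N`: vertices are the `N`-orbits, two distinct orbits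
being adjacent iff some vertex of one is adjacent to some vertex of the other. -/
def quotGraph (Γ : SimpleGraph V) (N : Subgroup (Equiv.Perm V)) :
    SimpleGraph (Quotient (orbitSetoid N)) :=
  SimpleGraph.fromRel (fun a b => ∃ x y : V, Γ.Adj x y ∧
    Quotient.mk (orbitSetoid N) x = a ∧ Quotient.mk (orbitSetoid N) y = b)

end QuotientGraph

section Subdivision

variable {W : Type*}

/-- The subdivision graph `S(Σ)` of a graph `Σ`: vertices are `EΣ ⊕ VΣ`, an edge
being adjacent to its endpoints. -/
def SubdivisionGraph (Sg : SimpleGraph W) : SimpleGraph (↥Sg.edgeSet ⊕ W) :=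
  SimpleGraph.fromRel (fun a b => ∃ (e : Sg.edgeSet) (w : W),
    a = Sum.inl e ∧ b = Sum.inr w ∧ w ∈ (e : Sym2 W))

/-- The graph on `B'` in which two vertices are adjacent iff they are at distance `2`
in `Γ`. -/
def distTwoGraph (Γ : SimpleGraph W) (B' : Set W) : SimpleGraph ↥B' where
  Adj a b := Γ.dist ↑a ↑b = 2
  symm := by
    refine ⟨?_⟩
    intro a b h
    rwa [SimpleGraph.dist_comm]
  loopless := by
    refine ⟨?_⟩
    intro a h
    simp [SimpleGraph.dist_self] at h

/-- `f 0, f 1, …, f t` is a `t`-arc of `Sg`. -/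
def IsArcOf (Sg : SimpleGraph W) (t : ℕ) (f : ℕ → W) : Prop :=
  (∀ i : ℕ, i < t → Sg.Adj (f i) (f (i + 1))) ∧
  (∀ i : ℕ, 1 ≤ i → i + 1 ≤ t → f (i - 1) ≠ f (i + 1))

end Subdivision


section AuxStarQuotient

variable {V : Type*}

lemma IsGraphAut.inv {Γ : SimpleGraph V} {g : Equiv.Perm V} (hg : IsGraphAut Γ g) :
    IsGraphAut Γ g⁻¹ := by
  intro u v
  conv_rhs => rw [← (Equiv.Perm.eq_inv_iff_eq (f := g) (y := u)).mp rfl, ← (Equiv.Perm.eq_inv_iff_eq (f := g) (y := v)).mp rfl]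
  exact (hg _ _).symm

lemma aut_dist {Γ : SimpleGraph V} (hconn : Γ.Connected) {g : Equiv.Perm V}
    (hg : IsGraphAut Γ g) (u v : V) : Γ.dist (g u) (g v) = Γ.dist u v := by
  have key : ∀ (h : Equiv.Perm V), IsGraphAut Γ h → ∀ a b : V,
      Γ.dist (h a) (h b) ≤ Γ.dist a b := by
    intro h hh a b
    obtain ⟨p, hp⟩ := hconn.exists_walk_length_eq_dist a b
    have hle : Γ.dist (h a) (h b) ≤ (p.map ⟨h, fun hadj => (hh _ _).mpr hadj⟩).length :=
      SimpleGraph.dist_le _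
    rwa [SimpleGraph.Walk.length_map, hp] at hle
  refine le_antisymm (key g hg u v) ?_
  have h2 := key g⁻¹ hg.inv (g u) (g v)
  simpa using h2

lemma aut_nbhd {Γ : SimpleGraph V} {g : Equiv.Perm V} (hg : IsGraphAut Γ g) (b : V) :
    Γ.neighborSet (g b) = (fun z => g z) '' Γ.neighborSet b := by
  ext y
  simp only [SimpleGraph.mem_neighborSet, Set.mem_image]
  constructor
  · intro h
    have h' : Γ.Adj (g b) (g (g⁻¹ y)) := by simpa using h
    exact ⟨g⁻¹ y, (hg _ _).mp h', by simp⟩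
  · rintro ⟨z, hz, rfl⟩
    exact (hg _ _).mpr hz

lemma walk_parity {Γ : SimpleGraph V} {B : Set V} (hbip : IsBipartition Γ B)
    {u v : V} (p : Γ.Walk u v) : ((u ∈ B ↔ v ∈ B) ↔ Even p.length) := by
  induction p with
  | nil => simp
  | cons h p ih =>
    have hb := hbip _ _ h
    rw [SimpleGraph.Walk.length_cons, Nat.even_add_one, ← ih]
    tauto

lemma dist_parity {Γ : SimpleGraph V} {B : Set V} (hconn : Γ.Connected)
    (hbip : IsBipartition Γ B) (u v : V) :
    ((u ∈ B ↔ v ∈ B) ↔ Even (Γ.dist u v)) := by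
  obtain ⟨p, hp⟩ := hconn.exists_walk_length_eq_dist u v
  rw [← hp]
  exact walk_parity hbip p

lemma aut_presB {Γ : SimpleGraph V} {B : Set V} (hconn : Γ.Connected)
    (hbip : IsBipartition Γ B) {g : Equiv.Perm V} (hg : IsGraphAut Γ g) {x : V}
    (hx : x ∈ B) (hgx : g x ∈ B) : ∀ v, g v ∈ B ↔ v ∈ B := by
  intro v
  have h1 := dist_parity hconn hbip (g x) (g v)
  have h2 := dist_parity hconn hbip x v
  rw [aut_dist hconn hg, ← h2] at h1
  tauto

lemma exists_adj {Γ : SimpleGraph V} (hconn : Γ.Connected) {x y : V} (hxy : x ≠ y)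
    (v : V) : ∃ w, Γ.Adj v w := by
  by_cases hvx : v = x
  · subst hvx
    obtain ⟨p⟩ := hconn v y
    cases p with
    | nil => exact absurd rfl hxy
    | cons h _ => exact ⟨_, h⟩
  · obtain ⟨p⟩ := hconn v x
    cases p with
    | nil => exact absurd rfl hvx
    | cons h _ => exact ⟨_, h⟩

lemma dist_two' {Γ : SimpleGraph V} (hconn : Γ.Connected) {u v w : V} (huv : u ≠ v)
    (hnadj : ¬ Γ.Adj u v) (h1 : Γ.Adj u w) (h2 : Γ.Adj w v) : Γ.dist u v = 2 := by
  have hle : Γ.dist u v ≤ 2 := by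
    have := SimpleGraph.dist_le
      (SimpleGraph.Walk.cons h1 (SimpleGraph.Walk.cons h2 SimpleGraph.Walk.nil))
    simpa using this
  have h0 : Γ.dist u v ≠ 0 := fun h => huv (hconn.dist_eq_zero_iff.mp h)
  have h1' : Γ.dist u v ≠ 1 := fun h => hnadj (SimpleGraph.dist_eq_one_iff_adj.mp h)
  omega

lemma porbit_self (N : Subgroup (Equiv.Perm V)) (x : V) : x ∈ POrbit N x :=
  ⟨1, N.one_mem, rfl⟩

lemma porbit_eq {N : Subgroup (Equiv.Perm V)} {x y : V} (h : y ∈ POrbit N x) :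
    POrbit N y = POrbit N x := by
  obtain ⟨n, hn, rfl⟩ := h
  ext z
  constructor
  · rintro ⟨m, hm, rfl⟩
    exact ⟨m * n, N.mul_mem hm hn, by simp [Equiv.Perm.mul_apply]⟩
  · rintro ⟨m, hm, rfl⟩
    exact ⟨m * n⁻¹, N.mul_mem hm (N.inv_mem hn), by simp [Equiv.Perm.mul_apply]⟩

lemma porbit_image {G N : Subgroup (Equiv.Perm V)}
    (hnorm : ∀ g ∈ G, ∀ n ∈ N, g * n * g⁻¹ ∈ N) {g : Equiv.Perm V} (hg : g ∈ G) (x : V) :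
    (fun z => g z) '' POrbit N x = POrbit N (g x) := by
  ext z
  simp only [Set.mem_image]
  constructor
  · rintro ⟨w, ⟨n, hn, rfl⟩, rfl⟩
    exact ⟨g * n * g⁻¹, hnorm g hg n hn, by simp [Equiv.Perm.mul_apply]⟩
  · rintro ⟨n, hn, rfl⟩
    refine ⟨(g⁻¹ * n * g) x, ⟨g⁻¹ * n * g, ?_, rfl⟩, by simp [Equiv.Perm.mul_apply]⟩
    have h2 := hnorm g⁻¹ (G.inv_mem hg) n hn
    simpa using h2

end AuxStarQuotient

/-- **Proposition `star quotient`**.  Under Hypothesis (*), the adjacency design `D(Γ)`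
has no repeated blocks and is resolvable with exactly `r` parallel classes, namely the
`N`-orbits on `Bᶜ`; moreover there are `k, ℓ ≥ 2` with `|B| = kℓ`, every block incident
with exactly `k` points and every point incident with exactly `r` blocks (so `D(Γ)` is a
`1-(kℓ, k, r)` design). -/
theorem statement12 {V : Type*} [Fintype V] (Γ : SimpleGraph V) (B : Set V)
    (hconn : Γ.Connected) (hbip : IsBipartition Γ B)
    (hncb : ¬ ∀ x ∈ B, ∀ y ∈ Bᶜ, Γ.Adj x y)
    (G N : Subgroup (Equiv.Perm V)) (hGaut : ∀ g ∈ G, IsGraphAut Γ g)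
    (hNG : N ≤ G) (hN1 : N ≠ ⊥) (hnorm : ∀ g ∈ G, ∀ n ∈ N, g * n * g⁻¹ ∈ N)
    (r s : ℕ) (hr : 2 ≤ r) (hs : 2 ≤ s)
    (hstar : IsStarlike Γ B N r) (hldt : LocallyDistTrans Γ G s) :
    -- no repeated blocks
    (∀ b ∈ Bᶜ, ∀ b' ∈ Bᶜ, Γ.neighborSet b = Γ.neighborSet b' → b = b') ∧
    -- each N-orbit on Bᶜ is a parallel class …
    (∀ b ∈ Bᶜ, ∀ x ∈ B, ∃! y : V, y ∈ POrbit N b ∧ Γ.Adj x y) ∧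
    -- … and there are exactly r of them
    ({S : Set V | ∃ x ∈ Bᶜ, S = POrbit N x}.ncard = r) ∧
    -- D(Γ) is a 1-(kℓ, k, r) design
    (∃ k ℓ : ℕ, 2 ≤ k ∧ 2 ≤ ℓ ∧ B.ncard = k * ℓ ∧
      (∀ b ∈ Bᶜ, (Γ.neighborSet b).ncard = k) ∧
      (∀ x ∈ B, (Γ.neighborSet x).ncard = r)) := by
  classical
  obtain ⟨hNB, hNtrans, horb⟩ := hstar
  obtain ⟨hdiam, htrans⟩ := hldt
  have hncb' := hncb
  push_neg at hncb'
  obtain ⟨x₀, hx₀, y₀, hy₀, hnadj₀⟩ := hncb'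
  have hx₀y₀ : x₀ ≠ y₀ := fun h => hy₀ (h ▸ hx₀)
  have hadj_ex : ∀ v : V, ∃ w, Γ.Adj v w := exists_adj hconn hx₀y₀
  have hNaut : ∀ n ∈ N, IsGraphAut Γ n := fun n hn => hGaut n (hNG hn)
  have hadjBc : ∀ {u v : V}, Γ.Adj u v → u ∈ B → v ∈ Bᶜ := by
    intro u v h hu
    exact fun hv => ((hbip u v h).mp hu) hv
  have hadjB : ∀ {u v : V}, Γ.Adj u v → u ∈ Bᶜ → v ∈ B := by
    intro u v h hu
    by_contra hv
    exact hu ((hbip u v h).mpr hv)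
  have hNBc : ∀ n ∈ N, ∀ v ∈ Bᶜ, n v ∈ Bᶜ := by
    intro n hn v hv hc
    exact hv ((hNB n hn v).mp hc)
  have hOrbBc : ∀ b ∈ Bᶜ, ∀ y ∈ POrbit N b, y ∈ Bᶜ := by
    rintro b hb y ⟨m, hm, rfl⟩
    exact hNBc m hm b hb
  -- transitivity on flags (incident point-block pairs)
  have hflag : ∀ x ∈ B, ∀ b ∈ Bᶜ, Γ.Adj x b → ∀ x' ∈ B, ∀ b' ∈ Bᶜ, Γ.Adj x' b' →
      ∃ g ∈ G, g x = x' ∧ g b = b' := by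
    intro x hx b hb hxb x' hx' b' hb' hxb'
    obtain ⟨n, hn, hnx⟩ := hNtrans x hx x' hx'
    have hadj1 : Γ.Adj x' (n b) := by
      have h := (hNaut n hn x b).mpr hxb
      rwa [hnx] at h
    have hd1 : Γ.dist x' (n b) = 1 := SimpleGraph.dist_eq_one_iff_adj.mpr hadj1
    have hd2 : Γ.dist x' b' = 1 := SimpleGraph.dist_eq_one_iff_adj.mpr hxb'
    obtain ⟨g, hgG, hgx', hgnb⟩ := htrans x' (n b) b' 1 le_rfl (by omega) hd1 hd2
    refine ⟨g * n, G.mul_mem hgG (hNG hn), ?_, ?_⟩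
    · simp only [Equiv.Perm.mul_apply]
      rw [hnx, hgx']
    · simp only [Equiv.Perm.mul_apply]
      rw [hgnb]
  -- transitivity on blocks, by elements preserving B
  have hblock : ∀ b ∈ Bᶜ, ∀ b' ∈ Bᶜ, ∃ g ∈ G, g b = b' ∧ (∀ v, g v ∈ B ↔ v ∈ B) := by
    intro b hb b' hb'
    obtain ⟨x, hbx⟩ := hadj_ex b
    have hxB : x ∈ B := hadjB hbx hb
    obtain ⟨x', hbx'⟩ := hadj_ex b'
    have hx'B : x' ∈ B := hadjB hbx' hb'
    obtain ⟨g, hgG, hgx, hgb⟩ := hflag x hxB b hb hbx.symm x' hx'B b' hb' hbx'.symm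
    exact ⟨g, hgG, hgb, aut_presB hconn hbip (hGaut g hgG) hxB (by rw [hgx]; exact hx'B)⟩
  -- uniform block valency k
  set k : ℕ := (Γ.neighborSet y₀).ncard with hkdef
  have hval : ∀ b ∈ Bᶜ, (Γ.neighborSet b).ncard = k := by
    intro b hb
    obtain ⟨g, hgG, hgb, _⟩ := hblock y₀ hy₀ b hb
    rw [← hgb, aut_nbhd (hGaut g hgG) y₀,
      Set.ncard_image_of_injective _ (Equiv.injective g)]
  -- propagation along distance-2 chains of blocks
  have hchain : ∀ P : V → Prop,
      (∀ c ∈ Bᶜ, P c → ∀ c' ∈ Bᶜ, Γ.dist c c' = 2 → P c') →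
      ∀ b ∈ Bᶜ, P b → ∀ b' ∈ Bᶜ, P b' := by
    intro P hstep b hb hPb b' hb'
    have good : ∀ (u v : V) (p : Γ.Walk u v),
        ((u ∈ Bᶜ ∧ P u) ∨ (u ∈ B ∧ ∀ c, Γ.Adj u c → P c)) →
        ((v ∈ Bᶜ ∧ P v) ∨ (v ∈ B ∧ ∀ c, Γ.Adj v c → P c)) := by
      intro u v p
      induction p with
      | nil => exact id
      | @cons u w v hadj q ih =>
        intro hGood
        apply ih
        rcases hGood with ⟨hu, hPu⟩ | ⟨hu, hnbr⟩
        · have hwB : w ∈ B := hadjB hadj hu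
          refine Or.inr ⟨hwB, ?_⟩
          intro c hc
          have hcBc : c ∈ Bᶜ := hadjBc hc hwB
          by_cases hcu : c = u
          · rw [hcu]; exact hPu
          · refine hstep u hu hPu c hcBc ?_
            have hnadj : ¬ Γ.Adj u c := fun h => hcBc (hadjB h hu)
            exact dist_two' hconn (fun h => hcu h.symm) hnadj hadj hc
        · have hwBc : w ∈ Bᶜ := hadjBc hadj hu
          exact Or.inl ⟨hwBc, hnbr w hadj⟩
    obtain ⟨p⟩ := hconn b b'
    rcases good b b' p (Or.inl ⟨hb, hPb⟩) with ⟨_, h⟩ | ⟨hB2, _⟩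
    · exact h
    · exact absurd hB2 hb'
  -- the N-orbits on blocks are parallel classes
  have hpar : ∀ b ∈ Bᶜ, ∀ x ∈ B, ∃! y, y ∈ POrbit N b ∧ Γ.Adj x y := by
    intro b hb x hx
    obtain ⟨v, hbv⟩ := hadj_ex b
    have hvB : v ∈ B := hadjB hbv hb
    obtain ⟨n, hn, hnv⟩ := hNtrans v hvB x hx
    have hxnb : Γ.Adj x (n b) := by
      have h := (hNaut n hn v b).mpr hbv.symm
      rwa [hnv] at h
    have hnbBc : n b ∈ Bᶜ := hNBc n hn b hb
    refine ⟨n b, ⟨⟨n, hn, rfl⟩, hxnb⟩, ?_⟩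
    rintro y' ⟨hy'orb, hy'adj⟩
    by_contra hne
    have hy'Bc : y' ∈ Bᶜ := hOrbBc b hb y' hy'orb
    have hy'nb : y' ∈ POrbit N (n b) := by
      rw [porbit_eq (⟨n, hn, rfl⟩ : n b ∈ POrbit N b)]
      exact hy'orb
    have hd12 : Γ.dist (n b) y' = 2 := by
      refine dist_two' hconn (fun h => hne h.symm) ?_ hxnb.symm hy'adj
      intro h
      exact hy'Bc (hadjB h hnbBc)
    have hsame : ∀ c ∈ Bᶜ, ∀ c' ∈ Bᶜ, Γ.dist c c' = 2 → c' ∈ POrbit N c := by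
      intro c hc c' hc' hdist
      obtain ⟨h, hhG, hhb, hhpres⟩ := hblock (n b) hnbBc c hc
      have hd : Γ.dist (n b) (h⁻¹ c') = 2 := by
        have he := aut_dist hconn (hGaut h hhG) (n b) (h⁻¹ c')
        rw [hhb, (Equiv.Perm.eq_inv_iff_eq (f := h) (y := c')).mp rfl] at he
        rw [← he, hdist]
      obtain ⟨g, hgG, hgfix, hgmap⟩ := htrans (n b) y' (h⁻¹ c') 2 (by omega) hs hd12 hd
      obtain ⟨m, hm, hmy⟩ := hy'nb
      have hgi : g⁻¹ (n b) = n b := by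
        conv_lhs => rw [← hgfix]
        simp
      have hmemorb : h⁻¹ c' ∈ POrbit N (n b) := by
        refine ⟨g * m * g⁻¹, hnorm g hgG m hm, ?_⟩
        simp only [Equiv.Perm.mul_apply, hgi, hmy, hgmap]
      have hc'orb : c' ∈ POrbit N (h (n b)) := by
        rw [← porbit_image hnorm hhG]
        exact ⟨h⁻¹ c', hmemorb, by simp⟩
      rwa [hhb] at hc'orb
    have hall : ∀ c ∈ Bᶜ, c ∈ POrbit N (n b) := by
      refine hchain (fun c => c ∈ POrbit N (n b)) ?_ (n b) hnbBc (porbit_self N (n b))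
      intro c hc hPc c' hc' hdist
      rw [← porbit_eq hPc]
      exact hsame c hc c' hc' hdist
    have hone : {S : Set V | ∃ z ∈ Bᶜ, S = POrbit N z} = {POrbit N (n b)} := by
      ext S
      simp only [Set.mem_setOf_eq, Set.mem_singleton_iff]
      constructor
      · rintro ⟨z, hz, rfl⟩
        exact porbit_eq (hall z hz)
      · rintro rfl
        exact ⟨n b, hnbBc, rfl⟩
    rw [hone, Set.ncard_singleton] at horb
    omega
  -- no repeated blocks
  have hnorep : ∀ b ∈ Bᶜ, ∀ b' ∈ Bᶜ, Γ.neighborSet b = Γ.neighborSet b' → b = b' := by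
    intro b hb b' hb' hnbeq
    by_contra hne
    obtain ⟨w, hbw⟩ := hadj_ex b
    have hwb' : Γ.Adj b' w := by
      have hm : w ∈ Γ.neighborSet b' := by
        rw [← hnbeq]
        exact hbw
      exact (Γ.mem_neighborSet b' w).mp hm
    have hdbb' : Γ.dist b b' = 2 := by
      refine dist_two' hconn hne ?_ hbw hwb'.symm
      intro h
      exact hb' (hadjB h hb)
    have hstep2 : ∀ c ∈ Bᶜ, ∀ c' ∈ Bᶜ, Γ.dist c c' = 2 →
        Γ.neighborSet c' = Γ.neighborSet c := by
      intro c hc c' hc' hdist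
      obtain ⟨h, hhG, hhb, hhpres⟩ := hblock b hb c hc
      have hd : Γ.dist b (h⁻¹ c') = 2 := by
        have he := aut_dist hconn (hGaut h hhG) b (h⁻¹ c')
        rw [hhb, (Equiv.Perm.eq_inv_iff_eq (f := h) (y := c')).mp rfl] at he
        rw [← he, hdist]
      obtain ⟨g, hgG, hgfix, hgmap⟩ := htrans b b' (h⁻¹ c') 2 (by omega) hs hdbb' hd
      have hnb1 : Γ.neighborSet (h⁻¹ c') = Γ.neighborSet b := by
        rw [← hgmap, aut_nbhd (hGaut g hgG) b', ← hnbeq, ← aut_nbhd (hGaut g hgG) b, hgfix]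
      calc Γ.neighborSet c' = Γ.neighborSet (h (h⁻¹ c')) := by
            rw [(Equiv.Perm.eq_inv_iff_eq (f := h) (y := c')).mp rfl]
        _ = (fun z => h z) '' Γ.neighborSet (h⁻¹ c') := aut_nbhd (hGaut h hhG) _
        _ = (fun z => h z) '' Γ.neighborSet b := by rw [hnb1]
        _ = Γ.neighborSet (h b) := (aut_nbhd (hGaut h hhG) b).symm
        _ = Γ.neighborSet c := by rw [hhb]
    have hall : ∀ c ∈ Bᶜ, Γ.neighborSet c = Γ.neighborSet b :=
      hchain (fun c => Γ.neighborSet c = Γ.neighborSet b)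
        (fun c hc hPc c' hc' hdist => (hstep2 c hc c' hc' hdist).trans hPc) b hb rfl
    refine hncb ?_
    intro x hx y hy
    obtain ⟨c, hxc⟩ := hadj_ex x
    have hcBc : c ∈ Bᶜ := hadjBc hxc hx
    have hxy : x ∈ Γ.neighborSet y := by
      rw [hall y hy, ← hall c hcBc]
      exact (Γ.mem_neighborSet c x).mpr hxc.symm
    exact ((Γ.mem_neighborSet y x).mp hxy).symm
  -- point valency equals r
  have hpoint : ∀ x ∈ B, (Γ.neighborSet x).ncard = r := by
    intro x hx
    have hinj : Set.InjOn (fun y => POrbit N y) (Γ.neighborSet x) := by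
      intro y hy y' hy' heq
      have hyadj : Γ.Adj x y := (Γ.mem_neighborSet x y).mp hy
      have hy'adj : Γ.Adj x y' := (Γ.mem_neighborSet x y').mp hy'
      have hyBc : y ∈ Bᶜ := hadjBc hyadj hx
      have heq' : POrbit N y = POrbit N y' := heq
      have hy'in : y' ∈ POrbit N y := by
        rw [heq']
        exact porbit_self N y'
      exact (hpar y hyBc x hx).unique ⟨porbit_self N y, hyadj⟩ ⟨hy'in, hy'adj⟩
    have himg : (fun y => POrbit N y) '' (Γ.neighborSet x)
        = {S : Set V | ∃ z ∈ Bᶜ, S = POrbit N z} := by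
      ext S
      simp only [Set.mem_image, Set.mem_setOf_eq, SimpleGraph.mem_neighborSet]
      constructor
      · rintro ⟨y, hy, rfl⟩
        exact ⟨y, hadjBc hy hx, rfl⟩
      · rintro ⟨z, hz, rfl⟩
        obtain ⟨y, ⟨hyorb, hyadj⟩, -⟩ := hpar z hz x hx
        exact ⟨y, hyadj, porbit_eq hyorb⟩
    rw [← Set.ncard_image_of_injOn hinj, himg]
    exact horb
  -- counting |B| = k * ℓ
  set O : Set V := POrbit N y₀ with hOdef
  have hOBc : ∀ c ∈ O, c ∈ Bᶜ := fun c hc => hOrbBc y₀ hy₀ c hc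
  have hfinB : B.Finite := Set.toFinite B
  have hfinO : O.Finite := Set.toFinite O
  have hfinN : ∀ c : V, (Γ.neighborSet c).Finite := fun c => Set.toFinite _
  have hU : hfinB.toFinset = hfinO.toFinset.biUnion (fun c => (hfinN c).toFinset) := by
    ext x
    simp only [Set.Finite.mem_toFinset, Finset.mem_biUnion, SimpleGraph.mem_neighborSet]
    constructor
    · intro hx
      obtain ⟨y, ⟨hyO, hyadj⟩, -⟩ := hpar y₀ hy₀ x hx
      exact ⟨y, hyO, hyadj.symm⟩
    · rintro ⟨c, hcO, hcx⟩
      exact hadjB hcx (hOBc c hcO)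
  have hdisj : ∀ c ∈ hfinO.toFinset, ∀ c' ∈ hfinO.toFinset, c ≠ c' →
      Disjoint ((hfinN c).toFinset) ((hfinN c').toFinset) := by
    intro c hc c' hc' hne
    rw [Set.Finite.mem_toFinset] at hc hc'
    rw [Finset.disjoint_left]
    intro a ha ha'
    rw [Set.Finite.mem_toFinset] at ha ha'
    have h1 : Γ.Adj a c := ((Γ.mem_neighborSet c a).mp ha).symm
    have h2 : Γ.Adj a c' := ((Γ.mem_neighborSet c' a).mp ha').symm
    have haB : a ∈ B := hadjB h1.symm (hOBc c hc)
    exact hne ((hpar y₀ hy₀ a haB).unique ⟨hc, h1⟩ ⟨hc', h2⟩)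
  have hBcard : B.ncard = k * O.ncard := by
    rw [Set.ncard_eq_toFinset_card B hfinB, hU, Finset.card_biUnion hdisj]
    have hsum : ∀ c ∈ hfinO.toFinset, ((hfinN c).toFinset).card = k := by
      intro c hc
      rw [Set.Finite.mem_toFinset] at hc
      rw [← Set.ncard_eq_toFinset_card _ (hfinN c)]
      exact hval c (hOBc c hc)
    rw [Finset.sum_congr rfl hsum, Finset.sum_const, smul_eq_mul,
      ← Set.ncard_eq_toFinset_card O hfinO, Nat.mul_comm]
  -- ℓ ≥ 2
  have hl2 : 2 ≤ O.ncard := by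
    by_contra hlt
    push_neg at hlt
    have hpos : 0 < O.ncard := (Set.ncard_pos hfinO).mpr ⟨y₀, porbit_self N y₀⟩
    have h1 : O.ncard = 1 := by omega
    obtain ⟨a, ha⟩ := Set.ncard_eq_one.mp h1
    rw [hOdef] at ha
    have hay : y₀ = a := by
      have hm : y₀ ∈ POrbit N y₀ := porbit_self N y₀
      rw [ha, Set.mem_singleton_iff] at hm
      exact hm
    have hally : ∀ x ∈ B, Γ.Adj x y₀ := by
      intro x hx
      obtain ⟨y, ⟨hyO, hyadj⟩, -⟩ := hpar y₀ hy₀ x hx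
      rw [ha, Set.mem_singleton_iff] at hyO
      rw [hyO, ← hay] at hyadj
      exact hyadj
    have hNy₀ : Γ.neighborSet y₀ = B := by
      apply Set.Subset.antisymm
      · intro w hw
        exact hadjB ((Γ.mem_neighborSet y₀ w).mp hw) hy₀
      · intro x hx
        exact (Γ.mem_neighborSet y₀ x).mpr (hally x hx).symm
    refine hncb ?_
    intro x hx y hy
    have hsub : Γ.neighborSet y ⊆ B := fun w hw =>
      hadjB ((Γ.mem_neighborSet y w).mp hw) hy
    have hcard : B.ncard ≤ (Γ.neighborSet y).ncard := by
      rw [hval y hy, hkdef, hNy₀]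
    have heqB : Γ.neighborSet y = B := Set.eq_of_subset_of_ncard_le hsub hcard hfinB
    have hxy : x ∈ Γ.neighborSet y := by
      rw [heqB]
      exact hx
    exact ((Γ.mem_neighborSet y x).mp hxy).symm
  -- k ≥ 2
  have hk2 : 2 ≤ k := by
    rcases Nat.lt_or_ge k 2 with hlt | hge
    · exfalso
      obtain ⟨w₀, hw₀⟩ := hadj_ex y₀
      have hkpos : 0 < k := by
        rw [hkdef]
        exact (Set.ncard_pos (hfinN y₀)).mpr ⟨w₀, (Γ.mem_neighborSet y₀ w₀).mpr hw₀⟩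
      have hk1 : k = 1 := by omega
      have hB2 : 1 < B.ncard := by
        rw [hBcard, hk1, one_mul]
        omega
      obtain ⟨x, x', hx, hx', hxx'⟩ := (Set.one_lt_ncard_iff hfinB).mp hB2
      have good2 : ∀ (u v : V) (p : Γ.Walk u v),
          (u = x ∨ Γ.Adj x u) → (v = x ∨ Γ.Adj x v) := by
        intro u v p
        induction p with
        | nil => exact id
        | @cons u w v hadj q ih =>
          intro h
          apply ih
          rcases h with rfl | hxu
          · exact Or.inr hadj
          · have huBc : u ∈ Bᶜ := hadjBc hxu hx
            have h1 : (Γ.neighborSet u).ncard = 1 := by rw [hval u huBc, hk1]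
            obtain ⟨a, ha⟩ := Set.ncard_eq_one.mp h1
            have hxa : x = a := by
              have hm : x ∈ Γ.neighborSet u := (Γ.mem_neighborSet u x).mpr hxu.symm
              rw [ha, Set.mem_singleton_iff] at hm
              exact hm
            have hwm : w ∈ Γ.neighborSet u := (Γ.mem_neighborSet u w).mpr hadj
            rw [ha, Set.mem_singleton_iff] at hwm
            exact Or.inl (hwm.trans hxa.symm)
      obtain ⟨p⟩ := hconn x x'
      rcases good2 x x' p (Or.inl rfl) with rfl | hadj
      · exact hxx' rfl
      · exact (hadjBc hadj hx) hx'
    · exact hge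
  exact ⟨hnorep, hpar, horb, k, O.ncard, hk2, hl2, hBcard, hval, hpoint⟩
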